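/- With L, Σ, c, the periods P = {p⁽¹⁾,…,p⁽q⁾}, m, R = {r}, X, Y, W and D as defined, the consensual language C(D) is commutative: if u ∈ C(D) and v ∈ Σ* with Ψ(v) = Ψ(u), then v ∈ C(D). -/

import Mathlib

namespace Consensual

/-- The double alphabet `Σ̃ = Σ × Bool`: second component `true` means the letter is dotted. -/
abbrev DLetter (S : Type) := S × Bool

variable {S : Type} [DecidableEq S]

/-- Partial match of two letters of the double alphabet:
`a @ å = å @ a = a`, `å @ å = å`, undefined otherwise. -/
def matchLetter (x y : DLetter S) : Option (DLetter S) :=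
  if x.1 = y.1 ∧ (x.2 ∨ y.2) then some (x.1, x.2 && y.2) else none

/-- Letterwise partial match of two words over the double alphabet. -/
def matchWord : List (DLetter S) → List (DLetter S) → Option (List (DLetter S))
  | [], [] => some []
  | x :: xs, y :: ys => do
      let l ← matchLetter x y
      let rest ← matchWord xs ys
      pure (l :: rest)
  | _, _ => none

/-- Elementwise match of two languages over the double alphabet. -/
def matchLang (B C : Language (DLetter S)) : Language (DLetter S) :=
  { w | ∃ u ∈ B, ∃ v ∈ C, matchWord u v = some w }

/-- Iterated match `B^{i@}`. -/
def matchIter (B : Language (DLetter S)) : ℕ → Language (DLetter S)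
  | 0 => B
  | i + 1 => matchLang (matchIter B i) B

/-- Match closure `B^@ = ⋃ i, B^{i@}`. -/
def matchClosure (B : Language (DLetter S)) : Language (DLetter S) :=
  ⨆ i, matchIter B i

/-- The embedding of a word over `Σ` as an undotted word over `Σ̃`. -/
def undotWord (w : List S) : List (DLetter S) := w.map (fun a => (a, false))

/-- The consensual language `C(B) = B^@ ∩ Σ*` with base `B`, as a language over `Σ`. -/
def Cons (B : Language (DLetter S)) : Language S :=
  { w | undotWord w ∈ matchClosure B }

/-- A word consisting only of dotted letters. -/
def allDotted (w : List (DLetter S)) : Prop := ∀ l ∈ w, l.2 = true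

/-- `Σ̊*`, the language of all-dotted words (including ε). -/
def dottedStar : Language (DLetter S) := { w | allDotted w }

/-- `B ⊆ Σ̃* − Σ̊⁺`: no nonempty all-dotted word belongs to `B`. -/
def ProperBase (B : Language (DLetter S)) : Prop :=
  ∀ w ∈ B, w ≠ [] → ¬ allDotted w

/-- `B` is in decomposed form with scaffold `sc` and fill `fl`. -/
def IsDecomposed (B sc fl : Language (DLetter S)) : Prop :=
  ProperBase B ∧ B = sc ⊔ fl ∧ Disjoint sc fl ∧
    Cons fl = (⊥ : Language S) ∧ matchLang sc sc = (⊥ : Language (DLetter S))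

/-- Two decomposed bases `sc' ⊔ fl'` and `sc'' ⊔ fl''` are joinable. -/
def Joinable (sc' fl' sc'' fl'' : Language (DLetter S)) : Prop :=
  IsDecomposed ((sc' ⊔ fl') ⊔ (sc'' ⊔ fl'')) (sc' ⊔ sc'') (fl' ⊔ fl'') ∧
    matchLang sc' fl'' = (⊥ : Language (DLetter S)) ∧
    matchLang sc'' fl' = (⊥ : Language (DLetter S))

/-- `dot`: make every letter of a word dotted. -/
def dotWord (w : List (DLetter S)) : List (DLetter S) := w.map (fun l => (l.1, true))

/-- The dot-product `B' ⊙ B'' = (sc'·sc'') ⊔ fl' ⊔ fl''` of two decomposed bases. -/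
def dotProduct (sc' fl' sc'' fl'' : Language (DLetter S)) : Language (DLetter S) :=
  (sc' * sc'') ⊔ fl' ⊔ fl''

/-- Two decomposed bases `sc' ⊔ fl'` and `sc'' ⊔ fl''` are concatenable. -/
def Concatenable (sc' fl' sc'' fl'' : Language (DLetter S)) : Prop :=
  IsDecomposed (dotProduct sc' fl' sc'' fl'') (sc' * sc'') (fl' ⊔ fl'') ∧
  (∀ w' : List (DLetter S), w' ≠ [] → ∀ y' ∈ sc', ∀ y'' ∈ sc'',
    ((∃ x' ∈ fl', w' = x' ++ dotWord y'' ∧ (matchWord x' y').isSome) ↔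
      (w' ∈ fl' ∧ (matchWord w' (y' ++ y'')).isSome))) ∧
  (∀ w'' : List (DLetter S), w'' ≠ [] → ∀ y' ∈ sc', ∀ y'' ∈ sc'',
    ((∃ x'' ∈ fl'', w'' = dotWord y' ++ x'' ∧ (matchWord x'' y'').isSome) ↔
      (w'' ∈ fl'' ∧ (matchWord w'' (y' ++ y'')).isSome)))

/-! ### Slots, scaffolds and fills -/

/-- The word `å a^{r−1} å a^{m−r−1}`. -/
def slotWord (m r : ℕ) (a : S) : List (DLetter S) :=
  (a, true) :: (List.replicate (r - 1) (a, false) ++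
    (a, true) :: List.replicate (m - r - 1) (a, false))

/-- `R_m(a) = {å a^{r−1} å a^{m−r−1} : r ∈ R}`. -/
def Rm (m : ℕ) (R : Set ℕ) (a : S) : Language (DLetter S) :=
  { w | ∃ r ∈ R, w = slotWord m r a }

/-- Projection of a word over `Σ̃` on the two-letter alphabet `{a, å}`. -/
def projA (a : S) (x : List (DLetter S)) : List (DLetter S) :=
  x.filter (fun l => decide (l.1 = a))

/-- The scaffold language `sc_{R,m}`. -/
def scaffold (m : ℕ) (R : Set ℕ) : Language (DLetter S) :=
  { x | ∀ a : S, projA a x ∈ KStar.kstar (Rm m R a ⊔ {[(a, false)]}) }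

/-- `switch`: interchange `a` and `å` in every position. -/
def switchWord (w : List (DLetter S)) : List (DLetter S) := w.map (fun l => (l.1, !l.2))

/-- The fill language `fl_{R,m} = switch(sc_{R,m}) − Σ̊*`. -/
def fill (m : ℕ) (R : Set ℕ) : Language (DLetter S) :=
  { w | ∃ u ∈ scaffold (S := S) m R, w = switchWord u } \ dottedStar

/-- A language is shiftable if it absorbs all-dotted padding on both sides. -/
def Shiftable (F : Language (DLetter S)) : Prop :=
  F = dottedStar * F * dottedStar

/-- `R` is a set of slots of module `m`. -/
def SlotSet (m : ℕ) (R : Set ℕ) : Prop :=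
  4 ≤ m ∧ 2 ∣ m ∧ R.Nonempty ∧ ∀ r ∈ R, 1 ≤ r ∧ r ≤ m / 2 - 1

/-- The factor `α(i)…α(i+m−1)` of `α` (positions numbered from 1). -/
def factorAt (α : List (DLetter S)) (i m : ℕ) : List (DLetter S) :=
  (α.drop (i - 1)).take m

/-- `i` is a restarting point of `α ∈ π_ã(sc_{R,m})`. -/
def RestartScaffold (m : ℕ) (R : Set ℕ) (a : S) (α : List (DLetter S)) (i : ℕ) : Prop :=
  1 ≤ i ∧ i + m - 1 ≤ α.length ∧ factorAt α i m ∈ Rm m R a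

/-- `i` is a restarting point of `α ∈ π_ã(fl_{R̂,m})`. -/
def RestartFill (m : ℕ) (Rh : Set ℕ) (a : S) (α : List (DLetter S)) (i : ℕ) : Prop :=
  1 ≤ i ∧ i + m - 1 ≤ α.length ∧ (∃ u ∈ Rm m Rh a, factorAt α i m = switchWord u)

/-! ### Parikh images, COM-SLIP, and the family C(⊔,·) -/

/-- The Parikh image of a word. -/
def parikh (w : List S) : S → ℕ := fun a => w.count a

/-- A linear subset of `ℕ^Σ`. -/
def IsLinearSet (T : Set (S → ℕ)) : Prop :=
  ∃ (q : ℕ) (c : S → ℕ) (p : Fin q → S → ℕ),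
    T = { v | ∃ n : Fin q → ℕ, v = c + ∑ i, n i • p i }

/-- A semilinear subset of `ℕ^Σ`: a finite union of linear sets. -/
def IsSemilinearSet (T : Set (S → ℕ)) : Prop :=
  ∃ (t : ℕ) (f : Fin t → Set (S → ℕ)), (∀ i, IsLinearSet (f i)) ∧ T = ⋃ i, f i

/-- A commutative language: membership only depends on the Parikh image. -/
def CommutativeLang (L : Language S) : Prop :=
  ∀ w ∈ L, ∀ v : List S, parikh v = parikh w → v ∈ L

/-- A COM-SLIP language: commutative with semilinear Parikh image. -/
def IsComSlip (L : Language S) : Prop :=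
  CommutativeLang L ∧ IsSemilinearSet (parikh '' L)

/-- The family `C(⊔,·)`: the smallest family containing the COM-SLIP languages and
closed under binary union and concatenation. -/
inductive CUC {S : Type} [DecidableEq S] : Language S → Prop
  | base {L : Language S} : IsComSlip L → CUC L
  | union {L M : Language S} : CUC L → CUC M → CUC (L ⊔ M)
  | concat {L M : Language S} : CUC L → CUC M → CUC (L * M)

/-- Regular languages, via acceptance by a DFA with finitely many states. -/
def IsRegularLang {γ : Type} (B : Language γ) : Prop :=
  ∃ (σ : Type) (_ : Fintype σ) (M : DFA γ σ), M.accepts = B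

/-! ### Shuffle, appending, and the base `D` for a COM-LIP language -/

/-- `IsShuffle x y z`: `z` is an interleaving of `x` and `y`. -/
inductive IsShuffle {γ : Type} : List γ → List γ → List γ → Prop
  | nil : IsShuffle [] [] []
  | left {x : γ} {xs ys zs} : IsShuffle xs ys zs → IsShuffle (x :: xs) ys (x :: zs)
  | right {y : γ} {xs ys zs} : IsShuffle xs ys zs → IsShuffle xs (y :: ys) (y :: zs)

/-- The shuffle of two languages. -/
def shuffleLang {γ : Type} (L M : Language γ) : Language γ :=
  { z | ∃ x ∈ L, ∃ y ∈ M, IsShuffle x y z }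

/-- Split `w` as `u·v` where `v` is the longest suffix of `w` with no occurrence
of `a` or `å`; returns `(u, v)`. -/
def splitSuffix (a : S) (w : List (DLetter S)) : List (DLetter S) × List (DLetter S) :=
  ((w.reverse.dropWhile (fun l => decide (l.1 ≠ a))).reverse,
   (w.reverse.takeWhile (fun l => decide (l.1 ≠ a))).reverse)

/-- The append operation `B ◁ A` for `A ⊆ a⁺`. -/
def appendA (a : S) (B : Language (DLetter S)) (A : Language S) : Language (DLetter S) :=
  { w' | ∃ w ∈ B, ∃ s ∈ A, ∃ z, IsShuffle (splitSuffix a w).2 (undotWord s) z ∧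
      w' = (splitSuffix a w).1 ++ z }

/-- Projection of a language over `Σ` on the single letter `a`. -/
def projLetter (a : S) (F : Language S) : Language S :=
  { y | ∃ w ∈ F, y = w.filter (fun l => decide (l = a)) }

/-- Letter-by-letter appending `B ◁ F` (over the alphabet `Fin k`,
processing the letters `a₁, …, a_k` in order). -/
def lblAppend {k : ℕ} (B : Language (DLetter (Fin k))) (F : Language (Fin k)) :
    Language (DLetter (Fin k)) :=
  (List.finRange k).foldl (fun Bc a => appendA a Bc (projLetter a F)) B

/-- Projection of a word over `Σ̃` on the undotted letters. -/
def projSigma (x : List (DLetter S)) : List S :=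
  (x.filter (fun l => !l.2)).map Prod.fst

/-- The fill part `X` of the decomposed base for a COM-LIP language with periods `p`. -/
def Xlang {k q : ℕ} (m r : ℕ) (p : Fin q → Fin k → ℕ) : Language (DLetter (Fin k)) :=
  { x | x ∈ fill m {r} ∧ ∃ i : Fin q, parikh (projSigma x) = p i }

/-- `Y = (R_m(a₁))* ⧢ … ⧢ (R_m(a_k))*`. -/
def Ylang (k : ℕ) (m : ℕ) (R : Set ℕ) : Language (DLetter (Fin k)) :=
  (List.finRange k).foldl
    (fun acc a => shuffleLang acc (KStar.kstar (Rm m R a))) (1 : Language (DLetter (Fin k)))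

/-- The finite commutative language `W` with Parikh image
`{c + h₁p⁽¹⁾ + … + h_qp⁽q⁾ : 0 ≤ hⱼ < m/2}`. -/
def Wlang {k q : ℕ} (m : ℕ) (c : Fin k → ℕ) (p : Fin q → Fin k → ℕ) : Language (Fin k) :=
  { w | ∃ h : Fin q → ℕ, (∀ i, h i < m / 2) ∧ parikh w = c + ∑ i, h i • p i }

/-- The decomposed base `D = X ⊔ (Y ◁ W)` for a COM-LIP language. -/
def Dlang {k q : ℕ} (m r : ℕ) (c : Fin k → ℕ) (p : Fin q → Fin k → ℕ) :
    Language (DLetter (Fin k)) :=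
  Xlang m r p ⊔ lblAppend (Ylang k m {r}) (Wlang m c p)

/-- `matchListAll [x₁, …, x_n] = some u` iff `u = x₁ @ x₂ @ … @ x_n`. -/
def matchListAll : List (List (DLetter S)) → Option (List (DLetter S))
  | [] => none
  | [x] => some x
  | x :: xs => (matchListAll xs).bind (fun u => matchWord x u)



/-! ### Auxiliary development for commutativity -/

/-- A language over the double alphabet closed under swapping two adjacent
positions carrying distinct base letters. -/
def Swappable (B : Language (DLetter S)) : Prop :=
  ∀ (l₁ : List (DLetter S)) (x y : DLetter S) (l₂ : List (DLetter S)),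
    x.1 ≠ y.1 → l₁ ++ x :: y :: l₂ ∈ B → l₁ ++ y :: x :: l₂ ∈ B

lemma Swappable.sup {B C : Language (DLetter S)} (hB : Swappable B) (hC : Swappable C) :
    Swappable (B ⊔ C) := by
  intro l₁ x y l₂ hxy h
  rcases (show _ ∈ B ∨ _ ∈ C from h) with h | h
  · exact Or.inl (hB _ _ _ _ hxy h)
  · exact Or.inr (hC _ _ _ _ hxy h)

lemma swappable_of_single_letter {B : Language (DLetter S)} {a : S}
    (h : ∀ w ∈ B, ∀ l ∈ w, l.1 = a) : Swappable B := by
  intro l₁ x y l₂ hxy hmem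
  exact absurd ((h _ hmem x (by simp)).trans (h _ hmem y (by simp)).symm) hxy

lemma swappable_one : Swappable (1 : Language (DLetter S)) := by
  intro l₁ x y l₂ _ h
  rw [Language.mem_one] at h
  simp at h

/-- Inversion for a shuffle producing a cons. -/
lemma isShuffle_cons_inv {γ : Type} {x y : List γ} {c : γ} {z : List γ}
    (h : IsShuffle x y (c :: z)) :
    (∃ x', x = c :: x' ∧ IsShuffle x' y z) ∨ (∃ y', y = c :: y' ∧ IsShuffle x y' z) := by
  cases h with
  | left h => exact Or.inl ⟨_, rfl, h⟩
  | right h => exact Or.inr ⟨_, rfl, h⟩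

/-- Swapping two adjacent letters of the result of a shuffle. -/
lemma isShuffle_swap {γ : Type} (z₁ : List γ) (x y : List γ) {α β : γ} {z₂ : List γ}
    (h : IsShuffle x y (z₁ ++ α :: β :: z₂)) :
    (∃ x₁ x₂, x = x₁ ++ α :: β :: x₂ ∧ IsShuffle (x₁ ++ β :: α :: x₂) y (z₁ ++ β :: α :: z₂)) ∨
    (∃ y₁ y₂, y = y₁ ++ α :: β :: y₂ ∧ IsShuffle x (y₁ ++ β :: α :: y₂) (z₁ ++ β :: α :: z₂)) ∨
    IsShuffle x y (z₁ ++ β :: α :: z₂) := by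
  induction z₁ generalizing x y with
  | nil =>
    cases h with
    | left h1 =>
      cases h1 with
      | left h2 => exact Or.inl ⟨[], _, rfl, .left (.left h2)⟩
      | right h2 => exact Or.inr (Or.inr (.right (.left h2)))
    | right h1 =>
      cases h1 with
      | left h2 => exact Or.inr (Or.inr (.left (.right h2)))
      | right h2 => exact Or.inr (Or.inl ⟨[], _, rfl, .right (.right h2)⟩)
  | cons c z₁ ih =>
    cases h with
    | left h1 =>
      rcases ih _ _ h1 with ⟨x₁, x₂, rfl, h'⟩ | ⟨y₁, y₂, rfl, h'⟩ | h'
      · exact Or.inl ⟨c :: x₁, x₂, rfl, .left h'⟩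
      · exact Or.inr (Or.inl ⟨y₁, y₂, rfl, .left h'⟩)
      · exact Or.inr (Or.inr (.left h'))
    | right h1 =>
      rcases ih _ _ h1 with ⟨x₁, x₂, rfl, h'⟩ | ⟨y₁, y₂, rfl, h'⟩ | h'
      · exact Or.inl ⟨x₁, x₂, rfl, .right h'⟩
      · exact Or.inr (Or.inl ⟨c :: y₁, y₂, rfl, .right h'⟩)
      · exact Or.inr (Or.inr (.right h'))

lemma Swappable.shuffle {L M : Language (DLetter S)} (hL : Swappable L) (hM : Swappable M) :
    Swappable (shuffleLang L M) := by
  rintro l₁ x y l₂ hxy ⟨u, hu, v, hv, hsh⟩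
  rcases isShuffle_swap l₁ u v hsh with ⟨x₁, x₂, hx, h'⟩ | ⟨y₁, y₂, hy, h'⟩ | h'
  · exact ⟨_, hL x₁ x y x₂ hxy (hx ▸ hu), v, hv, h'⟩
  · exact ⟨u, hu, _, hM y₁ x y y₂ hxy (hy ▸ hv), h'⟩
  · exact ⟨u, hu, v, hv, h'⟩

lemma slotWord_letter (m r : ℕ) (a : S) : ∀ l ∈ slotWord m r a, l.1 = a := by
  intro l hl
  simp only [slotWord, List.mem_cons, List.mem_append, List.mem_replicate] at hl
  rcases hl with rfl | ⟨-, rfl⟩ | rfl | ⟨-, rfl⟩ <;> rfl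

lemma Rm_letter (m : ℕ) (R : Set ℕ) (a : S) : ∀ w ∈ Rm m R a, ∀ l ∈ w, l.1 = a := by
  rintro w ⟨r, -, rfl⟩ l hl
  exact slotWord_letter m r a l hl

lemma kstar_Rm_letter (m : ℕ) (R : Set ℕ) (a : S) :
    ∀ w ∈ KStar.kstar (Rm m R a), ∀ l ∈ w, l.1 = a := by
  intro w hw l hl
  rcases Language.mem_kstar_iff_exists_nonempty.mp hw with ⟨T, rfl, hT⟩
  rcases List.mem_flatten.mp hl with ⟨y, hy, hly⟩
  exact Rm_letter m R a y (hT y hy).1 l hly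

lemma swappable_foldl {k : ℕ} (R : Set ℕ) (m : ℕ) :
    ∀ (l : List (Fin k)) (B : Language (DLetter (Fin k))), Swappable B →
      Swappable (l.foldl (fun acc a => shuffleLang acc (KStar.kstar (Rm m R a))) B)
  | [], _, hB => hB
  | a :: l, B, hB =>
    swappable_foldl R m l _
      (hB.shuffle (swappable_of_single_letter (kstar_Rm_letter m R a)))

lemma swappable_Ylang (k m : ℕ) (R : Set ℕ) : Swappable (Ylang k m R) :=
  swappable_foldl R m (List.finRange k) _ swappable_one

/-! #### Scaffold, fill and `X` are swappable -/

lemma projA_swap (a : S) (l₁ : List (DLetter S)) (x y : DLetter S) (l₂ : List (DLetter S))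
    (hxy : x.1 ≠ y.1) : projA a (l₁ ++ y :: x :: l₂) = projA a (l₁ ++ x :: y :: l₂) := by
  unfold projA
  simp only [List.filter_append, List.filter_cons]
  by_cases hx : x.1 = a <;> by_cases hy : y.1 = a <;> simp_all

lemma scaffold_swap {m : ℕ} {R : Set ℕ} {l₁ : List (DLetter S)} {x y : DLetter S}
    {l₂ : List (DLetter S)} (hxy : x.1 ≠ y.1)
    (h : l₁ ++ x :: y :: l₂ ∈ scaffold (S := S) m R) :
    l₁ ++ y :: x :: l₂ ∈ scaffold (S := S) m R :=
  fun a => (projA_swap a l₁ x y l₂ hxy) ▸ h a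

lemma switchWord_involutive (w : List (DLetter S)) : switchWord (switchWord w) = w := by
  unfold switchWord
  induction w with
  | nil => rfl
  | cons a t ih => simp only [List.map_cons, ih, Bool.not_not]

lemma mem_swap_iff {γ : Type} (l₁ : List γ) (x y : γ) (l₂ : List γ) (c : γ) :
    c ∈ l₁ ++ y :: x :: l₂ ↔ c ∈ l₁ ++ x :: y :: l₂ := by
  simp only [List.mem_append, List.mem_cons]
  tauto

lemma fill_swap {m : ℕ} {R : Set ℕ} {l₁ : List (DLetter S)} {x y : DLetter S}
    {l₂ : List (DLetter S)} (hxy : x.1 ≠ y.1)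
    (h : l₁ ++ x :: y :: l₂ ∈ fill (S := S) m R) :
    l₁ ++ y :: x :: l₂ ∈ fill (S := S) m R := by
  obtain ⟨⟨u, hu, hw⟩, hnd⟩ := h
  have hu' : u = switchWord (l₁ ++ x :: y :: l₂) := by
    rw [hw, switchWord_involutive]
  subst hu'
  have hsw : switchWord (l₁ ++ x :: y :: l₂) =
      switchWord l₁ ++ (x.1, !x.2) :: (y.1, !y.2) :: switchWord l₂ := by
    simp [switchWord]
  refine ⟨⟨switchWord l₁ ++ (y.1, !y.2) :: (x.1, !x.2) :: switchWord l₂, ?_, ?_⟩, ?_⟩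
  · exact scaffold_swap (x := (x.1, !x.2)) (y := (y.1, !y.2)) hxy (hsw ▸ hu)
  · have hsw2 : switchWord (l₁ ++ y :: x :: l₂) =
        switchWord l₁ ++ (y.1, !y.2) :: (x.1, !x.2) :: switchWord l₂ := by
      simp [switchWord]
    rw [← hsw2, switchWord_involutive]
  · intro hd
    apply hnd
    intro l hl
    exact hd l ((mem_swap_iff l₁ x y l₂ l).mpr hl)

lemma swap_perm {γ : Type} (l₁ : List γ) (x y : γ) (l₂ : List γ) :
    (l₁ ++ y :: x :: l₂).Perm (l₁ ++ x :: y :: l₂) :=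
  (List.Perm.swap x y l₂).append_left l₁

lemma swappable_Xlang {k q : ℕ} (m r : ℕ) (p : Fin q → Fin k → ℕ) :
    Swappable (Xlang m r p) := by
  rintro l₁ x y l₂ hxy ⟨hf, i, hp⟩
  refine ⟨fill_swap hxy hf, i, ?_⟩
  rw [← hp]
  funext a
  have hpm := ((swap_perm l₁ x y l₂).filter (fun l => !l.2)).map Prod.fst
  exact hpm.count_eq a

/-! #### `splitSuffix` and `appendA` -/

lemma takeWhile_append_of_all {γ : Type} (p : γ → Bool) (A B : List γ)
    (h : ∀ x ∈ A, p x) : (A ++ B).takeWhile p = A ++ B.takeWhile p := by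
  induction A with
  | nil => rfl
  | cons a t ih => simp_all [List.takeWhile_cons]

lemma dropWhile_append_of_all {γ : Type} (p : γ → Bool) (A B : List γ)
    (h : ∀ x ∈ A, p x) : (A ++ B).dropWhile p = B.dropWhile p := by
  induction A with
  | nil => rfl
  | cons a t ih => simp_all [List.dropWhile_cons]

/-- The defining properties of a valid split for `splitSuffix a`. -/
def GoodSplit (a : S) (u v : List (DLetter S)) : Prop :=
  (∀ l ∈ v, l.1 ≠ a) ∧ (u = [] ∨ ∃ u₀ e, u = u₀ ++ [e] ∧ (e : DLetter S).1 = a)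

lemma splitSuffix_eq {a : S} {u v : List (DLetter S)} (h : GoodSplit a u v) :
    splitSuffix a (u ++ v) = (u, v) := by
  obtain ⟨hv, hu⟩ := h
  have hvp : ∀ x ∈ v.reverse, (fun l : DLetter S => decide (l.1 ≠ a)) x = true := by
    intro x hx
    simpa using hv x (List.mem_reverse.mp hx)
  unfold splitSuffix
  rw [List.reverse_append, takeWhile_append_of_all _ _ _ hvp, dropWhile_append_of_all _ _ _ hvp]
  rcases hu with rfl | ⟨u₀, e, rfl, he⟩
  · simp
  · have hr : (u₀ ++ [e]).reverse = e :: u₀.reverse := by simp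
    rw [hr]
    simp [List.takeWhile_cons, List.dropWhile_cons, he]

lemma dropWhile_head_false {γ : Type} (p : γ → Bool) :
    ∀ (l : List γ) (c : γ) (t : List γ), l.dropWhile p = c :: t → p c = false := by
  intro l
  induction l with
  | nil => intro c t h; simp at h
  | cons a l ih =>
    intro c t h
    rw [List.dropWhile_cons] at h
    by_cases hp : p a = true
    · rw [if_pos hp] at h
      exact ih c t h
    · rw [if_neg hp] at h
      injection h with h1 h2
      subst h1
      simpa using hp

lemma goodSplit_splitSuffix (a : S) (w : List (DLetter S)) :
    (splitSuffix a w).1 ++ (splitSuffix a w).2 = w ∧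
      GoodSplit a (splitSuffix a w).1 (splitSuffix a w).2 := by
  refine ⟨?_, ?_, ?_⟩
  · show (List.dropWhile _ w.reverse).reverse ++ (List.takeWhile _ w.reverse).reverse = w
    rw [← List.reverse_append, List.takeWhile_append_dropWhile, List.reverse_reverse]
  · intro l hl
    have hl' := List.mem_takeWhile_imp (List.mem_reverse.mp hl)
    simpa using hl'
  · rcases hdw : List.dropWhile (fun l : DLetter S => decide (l.1 ≠ a)) w.reverse with _ | ⟨c, t⟩
    · left
      show (List.dropWhile _ w.reverse).reverse = []
      rw [hdw]
      rfl
    · right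
      refine ⟨t.reverse, c, ?_, ?_⟩
      · show (List.dropWhile _ w.reverse).reverse = _
        rw [hdw]
        simp
      · have hh := dropWhile_head_false _ _ _ _ hdw
        simpa using hh

lemma mem_appendA_iff {a : S} {B : Language (DLetter S)} {A : Language S}
    {w' : List (DLetter S)} :
    w' ∈ appendA a B A ↔ ∃ u v s z, u ++ v ∈ B ∧ GoodSplit a u v ∧ s ∈ A ∧
      IsShuffle v (undotWord s) z ∧ w' = u ++ z := by
  constructor
  · rintro ⟨w, hw, s, hs, z, hz, rfl⟩
    obtain ⟨heq, hg⟩ := goodSplit_splitSuffix a w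
    exact ⟨(splitSuffix a w).1, (splitSuffix a w).2, s, z, heq.symm ▸ hw, hg, hs, hz, rfl⟩
  · rintro ⟨u, v, s, z, hB, hg, hs, hsh, rfl⟩
    refine ⟨u ++ v, hB, s, hs, z, ?_, ?_⟩
    · rw [splitSuffix_eq hg]
      exact hsh
    · rw [splitSuffix_eq hg]

/-- Trichotomy for a factorization point inside a concatenation. -/
lemma append_eq_trichotomy {γ : Type} :
    ∀ (u z l₁ : List γ) (x y : γ) (l₂ : List γ), u ++ z = l₁ ++ x :: y :: l₂ →
    (∃ u₂, u = l₁ ++ x :: y :: u₂ ∧ l₂ = u₂ ++ z) ∨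
    (u = l₁ ++ [x] ∧ z = y :: l₂) ∨
    (∃ z₁, l₁ = u ++ z₁ ∧ z = z₁ ++ x :: y :: l₂)
  | [], z, l₁, x, y, l₂, h => Or.inr (Or.inr ⟨l₁, rfl, h⟩)
  | c :: u', z, [], x, y, l₂, h => by
    simp only [List.cons_append, List.nil_append, List.cons.injEq] at h
    obtain ⟨rfl, h⟩ := h
    match u', h with
    | [], h => exact Or.inr (Or.inl ⟨rfl, h⟩)
    | d :: u'', h =>
      have h2 : d = y ∧ u'' ++ z = l₂ := by simpa using h
      obtain ⟨rfl, h3⟩ := h2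
      exact Or.inl ⟨u'', by simp, h3.symm⟩
  | c :: u', z, e :: l₁', x, y, l₂, h => by
    simp only [List.cons_append, List.cons.injEq] at h
    obtain ⟨rfl, h⟩ := h
    rcases append_eq_trichotomy u' z l₁' x y l₂ h with ⟨u₂, rfl, h2⟩ | ⟨h1, h2⟩ | ⟨z₁, rfl, h2⟩
    · exact Or.inl ⟨u₂, by simp, h2⟩
    · exact Or.inr (Or.inl ⟨by simp [h1], h2⟩)
    · exact Or.inr (Or.inr ⟨z₁, by simp, h2⟩)

lemma swappable_appendA {a : S} {B : Language (DLetter S)} {A : Language S}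
    (hB : Swappable B) (hA : ∀ s ∈ A, ∀ b ∈ s, b = a) :
    Swappable (appendA a B A) := by
  intro l₁ x y l₂ hxy hw
  rw [mem_appendA_iff] at hw ⊢
  obtain ⟨u, v, s, z, hBm, ⟨hv, hu⟩, hs, hsh, heq⟩ := hw
  have hsl : ∀ c ∈ undotWord s, (c : DLetter S).1 = a := by
    intro c hc
    obtain ⟨b, hb, rfl⟩ := List.mem_map.mp hc
    exact hA s hs b hb
  rcases append_eq_trichotomy u z l₁ x y l₂ heq.symm with
    ⟨u₂, rfl, rfl⟩ | ⟨rfl, rfl⟩ | ⟨z₁, rfl, rfl⟩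
  · -- both positions inside u
    rcases hu with hnil | ⟨u₀, e, hue, he⟩
    · simp at hnil
    rcases List.eq_nil_or_concat u₂ with rfl | ⟨u₃, e', rfl⟩
    · -- u = l₁ ++ [x, y]; y is the last letter of u, so y.1 = a
      have h2 : (l₁ ++ [x]) ++ [y] = u₀ ++ [e] := by simpa using hue
      have hy : y = e := by simpa using (List.append_inj' h2 rfl).2
      have hya : y.1 = a := hy ▸ he
      have hxa : x.1 ≠ a := fun hh => hxy (hh.trans hya.symm)
      refine ⟨l₁ ++ [y], x :: v, s, x :: z, ?_, ⟨?_, ?_⟩, hs, .left hsh, ?_⟩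
      · have hBB : l₁ ++ y :: x :: v ∈ B := by
          apply hB l₁ x y v hxy
          simpa using hBm
        simpa using hBB
      · intro l hl
        rcases List.mem_cons.mp hl with rfl | hl
        · exact hxa
        · exact hv l hl
      · exact Or.inr ⟨l₁, y, rfl, hya⟩
      · simp
    · -- u = l₁ ++ x :: y :: (u₃ ++ [e'])
      have h2 : (l₁ ++ x :: y :: u₃) ++ [e'] = u₀ ++ [e] := by simpa using hue
      have he2 : e' = e := by simpa using (List.append_inj' h2 rfl).2
      refine ⟨l₁ ++ y :: x :: (u₃ ++ [e']), v, s, z, ?_, ⟨hv, ?_⟩, hs, hsh, ?_⟩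
      · have hBB : l₁ ++ y :: x :: (u₃ ++ [e'] ++ v) ∈ B := by
          apply hB l₁ x y (u₃ ++ [e'] ++ v) hxy
          simpa using hBm
        simpa using hBB
      · exact Or.inr ⟨l₁ ++ y :: x :: u₃, e', by simp, he2 ▸ he⟩
      · simp
  · -- straddling: u = l₁ ++ [x], z = y :: l₂
    have hxa : x.1 = a := by
      rcases hu with hnil | ⟨u₀, e, hue, he⟩
      · simp at hnil
      · have hx : x = e := by simpa using (List.append_inj' hue rfl).2
        exact hx ▸ he
    rcases isShuffle_cons_inv hsh with ⟨v', rfl, h'⟩ | ⟨s', hseq, h'⟩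
    · refine ⟨l₁ ++ [y, x], v', s, l₂, ?_, ⟨?_, ?_⟩, hs, h', ?_⟩
      · have hBB : l₁ ++ y :: x :: v' ∈ B := by
          apply hB l₁ x y v' hxy
          simpa using hBm
        simpa using hBB
      · intro l hl
        exact hv l (List.mem_cons_of_mem _ hl)
      · exact Or.inr ⟨l₁ ++ [y], x, by simp, hxa⟩
      · simp
    · exfalso
      have hya : y.1 = a := hsl y (by rw [hseq]; simp)
      exact hxy (hxa.trans hya.symm)
  · -- both positions inside z
    rcases isShuffle_swap z₁ v (undotWord s) hsh with
      ⟨v₁, v₂, rfl, h'⟩ | ⟨s₁, s₂, hseq, h'⟩ | h'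
    · refine ⟨u, v₁ ++ y :: x :: v₂, s, z₁ ++ y :: x :: l₂, ?_, ⟨?_, hu⟩, hs, h', by simp⟩
      · have hBB : (u ++ v₁) ++ y :: x :: v₂ ∈ B := by
          apply hB (u ++ v₁) x y v₂ hxy
          simpa using hBm
        simpa using hBB
      · intro l hl
        exact hv l ((mem_swap_iff v₁ x y v₂ l).mp hl)
    · exfalso
      have hxa : x.1 = a := hsl x (by rw [hseq]; simp)
      have hya : y.1 = a := hsl y (by rw [hseq]; simp)
      exact hxy (hxa.trans hya.symm)
    · exact ⟨u, v, s, z₁ ++ y :: x :: l₂, hBm, ⟨hv, hu⟩, hs, h', by simp⟩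

lemma projLetter_single {k : ℕ} (a : Fin k) (F : Language (Fin k)) :
    ∀ s ∈ projLetter a F, ∀ b ∈ s, b = a := by
  rintro s ⟨w, hw, rfl⟩ b hb
  simpa using List.of_mem_filter hb

lemma swappable_lblAppend {k : ℕ} (B : Language (DLetter (Fin k))) (F : Language (Fin k))
    (hB : Swappable B) : Swappable (lblAppend B F) := by
  unfold lblAppend
  generalize List.finRange k = l
  induction l generalizing B with
  | nil => exact hB
  | cons a l ih => exact ih _ (swappable_appendA hB (projLetter_single a F))

lemma swappable_Dlang {k q : ℕ} (m r : ℕ) (c : Fin k → ℕ) (p : Fin q → Fin k → ℕ) :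
    Swappable (Dlang m r c p) :=
  (swappable_Xlang m r p).sup (swappable_lblAppend _ _ (swappable_Ylang k m {r}))

/-! #### Match versus swapping -/

lemma matchWord_cons_eq (x y : DLetter S) (xs ys : List (DLetter S)) :
    matchWord (x :: xs) (y :: ys) =
      (matchLetter x y).bind (fun l => (matchWord xs ys).bind (fun rest => some (l :: rest))) :=
  rfl

lemma matchLetter_fst {x y c : DLetter S} (h : matchLetter x y = some c) :
    x.1 = c.1 ∧ y.1 = c.1 := by
  unfold matchLetter at h
  split at h
  · rename_i hcond
    simp only [Option.some.injEq] at h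
    subst h
    exact ⟨rfl, hcond.1.symm⟩
  · exact absurd h (by simp)

lemma matchWord_split : ∀ (w₁ w₂ u v : List (DLetter S)),
    matchWord u v = some (w₁ ++ w₂) →
    ∃ u₁ u₂ v₁ v₂, u = u₁ ++ u₂ ∧ v = v₁ ++ v₂ ∧ u₁.length = w₁.length ∧
      v₁.length = w₁.length ∧ matchWord u₁ v₁ = some w₁ ∧ matchWord u₂ v₂ = some w₂ := by
  intro w₁
  induction w₁ with
  | nil => exact fun w₂ u v h => ⟨[], u, [], v, rfl, rfl, rfl, rfl, rfl, h⟩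
  | cons c w₁ ih =>
    intro w₂ u v h
    match u, v with
    | [], [] => simp [matchWord] at h
    | [], xv :: v => simp [matchWord] at h
    | xu :: u, [] => simp [matchWord] at h
    | xu :: u, xv :: v =>
      rw [matchWord_cons_eq] at h
      rcases hml : matchLetter xu xv with _ | l <;> rw [hml] at h
      · simp at h
      rcases hmw : matchWord u v with _ | rest <;> rw [hmw] at h
      · simp at h
      simp only [Option.bind_some, Option.some.injEq, List.cons_append, List.cons.injEq] at h
      obtain ⟨rfl, hrest⟩ := h
      obtain ⟨u₁, u₂, v₁, v₂, rfl, rfl, hl1, hl2, hm1, hm2⟩ :=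
        ih w₂ u v (hmw.trans (congrArg some hrest))
      refine ⟨xu :: u₁, u₂, xv :: v₁, v₂, rfl, rfl, by simp [hl1], by simp [hl2], ?_, hm2⟩
      rw [matchWord_cons_eq, hml, hm1]
      rfl

lemma matchWord_append : ∀ (u₁ v₁ w₁ u₂ v₂ w₂ : List (DLetter S)),
    matchWord u₁ v₁ = some w₁ → matchWord u₂ v₂ = some w₂ →
    matchWord (u₁ ++ u₂) (v₁ ++ v₂) = some (w₁ ++ w₂) := by
  intro u₁
  induction u₁ with
  | nil =>
    intro v₁ w₁ u₂ v₂ w₂ h1 h2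
    match v₁, h1 with
    | [], h1 =>
      have hw : w₁ = [] := by
        have : some ([] : List (DLetter S)) = some w₁ := h1
        simpa using this.symm
      subst hw
      simpa using h2
    | xv :: v₁, h1 => simp [matchWord] at h1
  | cons xu u₁ ih =>
    intro v₁ w₁ u₂ v₂ w₂ h1 h2
    match v₁, h1 with
    | [], h1 => simp [matchWord] at h1
    | xv :: v₁, h1 =>
      rw [matchWord_cons_eq] at h1
      rcases hml : matchLetter xu xv with _ | l <;> rw [hml] at h1
      · simp at h1
      rcases hmw : matchWord u₁ v₁ with _ | rest <;> rw [hmw] at h1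
      · simp at h1
      simp only [Option.bind_some, Option.some.injEq] at h1
      subst h1
      show matchWord (xu :: (u₁ ++ u₂)) (xv :: (v₁ ++ v₂)) = _
      rw [matchWord_cons_eq, hml, ih v₁ rest u₂ v₂ w₂ hmw h2]
      rfl

lemma matchWord_nil_eq : matchWord ([] : List (DLetter S)) [] = some [] := rfl

lemma matchWord_pair {a₁ b₁ a₂ b₂ α β : DLetter S}
    (h : matchWord [a₁, b₁] [a₂, b₂] = some [α, β]) :
    matchWord [b₁, a₁] [b₂, a₂] = some [β, α] ∧
      a₁.1 = α.1 ∧ b₁.1 = β.1 ∧ a₂.1 = α.1 ∧ b₂.1 = β.1 := by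
  rcases h1 : matchLetter a₁ a₂ with _ | l₁ <;>
    rcases h2 : matchLetter b₁ b₂ with _ | l₂ <;>
      simp only [matchWord_cons_eq, matchWord_nil_eq, h1, h2, Option.bind_some,
        Option.bind_none, Option.some.injEq, List.cons.injEq, and_true, reduceCtorEq] at h
  obtain ⟨rfl, rfl⟩ := h
  refine ⟨?_, (matchLetter_fst h1).1, (matchLetter_fst h2).1,
    (matchLetter_fst h1).2, (matchLetter_fst h2).2⟩
  simp only [matchWord_cons_eq, matchWord_nil_eq, h1, h2, Option.bind_some]

lemma matchIter_swap {k q : ℕ} {m r : ℕ} {c : Fin k → ℕ} {p : Fin q → Fin k → ℕ} :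
    ∀ (i : ℕ) (l₁ : List (DLetter (Fin k))) (x y : DLetter (Fin k))
      (l₂ : List (DLetter (Fin k))),
    x.1 ≠ y.1 → l₁ ++ x :: y :: l₂ ∈ matchIter (Dlang m r c p) i →
    l₁ ++ y :: x :: l₂ ∈ matchIter (Dlang m r c p) i := by
  intro i
  induction i with
  | zero => exact fun l₁ x y l₂ hxy h => swappable_Dlang m r c p l₁ x y l₂ hxy h
  | succ i ih =>
    rintro l₁ x y l₂ hxy ⟨u, hu, v, hv, hm⟩
    obtain ⟨u₁, u₂, v₁, v₂, rfl, rfl, hlu, hlv, hm1, hm2⟩ :=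
      matchWord_split l₁ (x :: y :: l₂) u v hm
    obtain ⟨u₃, u₄, v₃, v₄, rfl, rfl, hlu2, hlv2, hm3, hm4⟩ :=
      matchWord_split [x, y] l₂ u₂ v₂ hm2
    obtain ⟨a₁, b₁, rfl⟩ : ∃ aa bb, u₃ = [aa, bb] := by
      rcases u₃ with _ | ⟨aa, _ | ⟨bb, _ | ⟨cc, t⟩⟩⟩
      · simp at hlu2
      · simp at hlu2
      · exact ⟨aa, bb, rfl⟩
      · simp at hlu2
    obtain ⟨a₂, b₂, rfl⟩ : ∃ aa bb, v₃ = [aa, bb] := by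
      rcases v₃ with _ | ⟨aa, _ | ⟨bb, _ | ⟨cc, t⟩⟩⟩
      · simp at hlv2
      · simp at hlv2
      · exact ⟨aa, bb, rfl⟩
      · simp at hlv2
    obtain ⟨hm3', hfa, hfb, hga, hgb⟩ := matchWord_pair hm3
    have hne1 : a₁.1 ≠ b₁.1 := by rw [hfa, hfb]; exact hxy
    have hne2 : a₂.1 ≠ b₂.1 := by rw [hga, hgb]; exact hxy
    have hu' := ih u₁ a₁ b₁ u₄ hne1 hu
    have hv' := swappable_Dlang m r c p v₁ a₂ b₂ v₄ hne2 hv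
    have hm' := matchWord_append u₁ v₁ l₁ ([b₁, a₁] ++ u₄) ([b₂, a₂] ++ v₄) ([y, x] ++ l₂) hm1
      (matchWord_append [b₁, a₁] [b₂, a₂] [y, x] u₄ v₄ l₂ hm3' hm4)
    exact ⟨u₁ ++ b₁ :: a₁ :: u₄, hu', v₁ ++ b₂ :: a₂ :: v₄, hv', hm'⟩

/-! #### From permutations to membership -/

lemma mem_matchClosure_iff {B : Language (DLetter S)} {w : List (DLetter S)} :
    w ∈ matchClosure B ↔ ∃ i, w ∈ matchIter B i :=
  Language.mem_iSup

lemma cons_perm_aux {k q : ℕ} {m r : ℕ} {c : Fin k → ℕ} {p : Fin q → Fin k → ℕ}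
    {t t' : List (Fin k)} (hperm : t.Perm t') :
    ∀ l₁ l₂ : List (Fin k), undotWord (l₁ ++ t ++ l₂) ∈ matchClosure (Dlang m r c p) →
      undotWord (l₁ ++ t' ++ l₂) ∈ matchClosure (Dlang m r c p) := by
  induction hperm with
  | nil => exact fun _ _ h => h
  | cons a h ih =>
    intro l₁ l₂ hh
    have h1 := ih (l₁ ++ [a]) l₂ (by simpa [List.append_assoc] using hh)
    simpa [List.append_assoc] using h1
  | swap x y l =>
    intro l₁ l₂ hh
    by_cases hxy : x = y
    · subst hxy
      exact hh
    · obtain ⟨i, hi⟩ := mem_matchClosure_iff.mp hh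
      refine mem_matchClosure_iff.mpr ⟨i, ?_⟩
      have hi' : undotWord l₁ ++ (y, false) :: (x, false) :: undotWord (l ++ l₂)
          ∈ matchIter (Dlang m r c p) i := by
        simpa [undotWord] using hi
      have hsw := matchIter_swap i (undotWord l₁) (y, false) (x, false)
        (undotWord (l ++ l₂)) (fun hh2 => hxy ((show y = x from hh2)).symm) hi'
      simpa [undotWord] using hsw
  | trans h1 h2 ih1 ih2 => exact fun l₁ l₂ hh => ih2 l₁ l₂ (ih1 l₁ l₂ hh)


/-- the consensual language `C(D)` is commutative. -/
theorem cons_D_commutative (k q : ℕ) (hk : 0 < k) (hq : 0 < q)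
    (L : Language (Fin k)) (c : Fin k → ℕ) (p : Fin q → Fin k → ℕ)
    (hLcom : CommutativeLang L)
    (hLpsi : parikh '' (L : Set (List (Fin k))) =
      { v | ∃ n : Fin q → ℕ, v = c + ∑ i, n i • p i })
    (heven : ∀ i a, 2 ∣ p i a)
    (m r : ℕ) (hm : 4 ≤ m) (hme : 2 ∣ m) (hr : 0 < r) (hrm : r < m / 2) :
    ∀ u ∈ Cons (Dlang m r c p), ∀ v : List (Fin k),
      parikh v = parikh u → v ∈ Cons (Dlang m r c p) := by
  intro u hu v hpv
  have hperm : u.Perm v := List.perm_iff_count.mpr (fun a => (congrFun hpv a).symm)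
  have h := cons_perm_aux (m := m) (r := r) (c := c) (p := p) hperm [] []
    (by have hu' : undotWord u ∈ matchClosure (Dlang m r c p) := hu; simpa using hu')
  exact (by simpa using h : undotWord v ∈ matchClosure (Dlang m r c p))

end Consensual
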